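/- arXiv:1308.5818 — 8 statements merged into one kernel-verified Lean document; each statement's English description precedes it below -/
import Mathlib

section
/- Let F be as in the class Ω conditions (F1)–(F4) and for large n let x₁(n) be the unique positive solution of F(x) = n·x. Then there exists α > 0, depending only on A, A₁, A₂, such that n·x₁(n) ≥ n^α for all sufficiently large n. -/
open Set Filter

lemma mono_aux (A c : ℝ) (hA : 0 < A) (F F' : ℝ → ℝ)
    (hderiv : ∀ x ∈ Set.Ioc 0 A, HasDerivAt F (F' x) x)
    (h : ∀ x ∈ Set.Ioc 0 A, 0 ≤ F' x * x ^ c + F x * (c * x ^ (c - 1))) :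
    ∀ x ∈ Set.Ioc 0 A, F x * x ^ c ≤ F A * A ^ c := by
  intro x hx
  rcases eq_or_lt_of_le hx.2 with rfl | hxA
  · exact le_refl _
  set G : ℝ → ℝ := fun t => F t * t ^ c with hG
  have hsub : Set.Icc x A ⊆ Set.Ioc 0 A := fun t ht => ⟨lt_of_lt_of_le hx.1 ht.1, ht.2⟩
  have hGd : ∀ t ∈ Set.Icc x A, HasDerivAt G (F' t * t ^ c + F t * (c * t ^ (c - 1))) t := by
    intro t ht
    have ht' := hsub ht
    exact (hderiv t ht').mul (Real.hasDerivAt_rpow_const (Or.inl ht'.1.ne'))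
  have hmono : MonotoneOn G (Set.Icc x A) := by
    apply monotoneOn_of_deriv_nonneg (convex_Icc x A)
    · exact fun t ht => (hGd t ht).continuousAt.continuousWithinAt
    · intro t ht
      rw [interior_Icc] at ht
      exact (hGd t (Ioo_subset_Icc_self ht)).differentiableAt.differentiableWithinAt
    · intro t ht
      rw [interior_Icc] at ht
      rw [(hGd t (Ioo_subset_Icc_self ht)).deriv]
      exact h t (hsub (Ioo_subset_Icc_self ht))
  exact hmono ⟨le_refl x, hx.2⟩ ⟨hx.2, le_refl A⟩ hx.2

theorem stmt_2 (A A₁ A₂ : ℝ) (hA : 0 < A) (hA₁ : 0 < A₁) (hA₂ : 0 < A₂)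
    (F F' : ℝ → ℝ)
    (hFpos : ∀ x ∈ Set.Ioc 0 A, 0 < F x)
    (hanti : StrictAntiOn F (Set.Ioc 0 A))
    (htop : Filter.Tendsto F (nhdsWithin 0 (Set.Ioi 0)) Filter.atTop)
    (hderiv : ∀ x ∈ Set.Ioc 0 A, HasDerivAt F (F' x) x)
    (hlow : ∀ x ∈ Set.Ioc 0 A, A₂ * F x / x ≤ -F' x)
    (hup : ∀ x ∈ Set.Ioc 0 A, -F' x ≤ A₁ * F x / x)
    (x₁ : ℝ → ℝ)
    (hx₁ : ∀ n : ℝ, F A / A ≤ n → x₁ n ∈ Set.Ioc 0 A ∧ F (x₁ n) = n * x₁ n) :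
    ∃ α > (0:ℝ), ∃ N : ℝ, ∀ n : ℝ, N ≤ n → n ^ α ≤ n * x₁ n := by
  have hFA : 0 < F A := hFpos A ⟨hA, le_refl A⟩
  set C₁ : ℝ := F A * A ^ A₁ with hC₁def
  set C₂ : ℝ := F A * A ^ A₂ with hC₂def
  have hC₁ : 0 < C₁ := mul_pos hFA (Real.rpow_pos_of_pos hA A₁)
  have hC₂ : 0 < C₂ := mul_pos hFA (Real.rpow_pos_of_pos hA A₂)
  have h1A₁ : (0:ℝ) < 1 + A₁ := by linarith
  set γ : ℝ := A₂ / (1 + A₁) with hγdef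
  have hγ : 0 < γ := div_pos hA₂ h1A₁
  set α : ℝ := γ / 2 with hαdef
  have hα : 0 < α := by positivity
  set K : ℝ := max 1 (C₁ ^ γ / C₂) with hKdef
  have hK1 : (1:ℝ) ≤ K := le_max_left _ _
  have hK0 : 0 < K := lt_of_lt_of_le one_pos hK1
  refine ⟨α, hα, max (F A / A) (K ^ (1/α)), fun n hn => ?_⟩
  have hn1 : F A / A ≤ n := le_trans (le_max_left _ _) hn
  have hn2 : K ^ (1/α) ≤ n := le_trans (le_max_right _ _) hn
  have hnpos : 0 < n := lt_of_lt_of_le (div_pos hFA hA) hn1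
  obtain ⟨hxmem, hFx⟩ := hx₁ n hn1
  set x : ℝ := x₁ n with hxdef
  have hx0 : 0 < x := hxmem.1
  -- Upper bound: F x * x ^ A₁ ≤ C₁
  have hup' : F x * x ^ A₁ ≤ C₁ := by
    apply mono_aux A A₁ hA F F' hderiv _ x hxmem
    intro t ht
    have ht0 : 0 < t := ht.1
    have h1 := hup t ht
    have htc := Real.rpow_add ht0 1 (A₁ - 1)
    simp only [Real.rpow_one] at htc
    rw [show (1:ℝ) + (A₁ - 1) = A₁ by ring] at htc
    have hmul : -(F' t) * t ^ A₁ ≤ A₁ * F t / t * t ^ A₁ :=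
      mul_le_mul_of_nonneg_right h1 (Real.rpow_pos_of_pos ht0 A₁).le
    have heq : A₁ * F t / t * t ^ A₁ = F t * (A₁ * t ^ (A₁ - 1)) := by
      rw [htc]; field_simp
    rw [heq] at hmul
    linarith
  -- Lower bound: C₂ ≤ F x * x ^ A₂
  have hlow' : C₂ ≤ F x * x ^ A₂ := by
    have hneg := mono_aux A A₂ hA (fun t => -(F t)) (fun t => -(F' t))
      (fun t ht => (hderiv t ht).neg) ?_ x hxmem
    · linarith
    intro t ht
    have ht0 : 0 < t := ht.1
    have h1 := hlow t ht
    have htc := Real.rpow_add ht0 1 (A₂ - 1)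
    simp only [Real.rpow_one] at htc
    rw [show (1:ℝ) + (A₂ - 1) = A₂ by ring] at htc
    have hmul : A₂ * F t / t * t ^ A₂ ≤ -(F' t) * t ^ A₂ :=
      mul_le_mul_of_nonneg_right h1 (Real.rpow_pos_of_pos ht0 A₂).le
    have heq : A₂ * F t / t * t ^ A₂ = F t * (A₂ * t ^ (A₂ - 1)) := by
      rw [htc]; field_simp
    rw [heq] at hmul
    linarith
  -- x ≤ y where y = (C₁ / n) ^ (1 / (1 + A₁))
  set y : ℝ := (C₁ / n) ^ (1 / (1 + A₁)) with hydef
  have hy0 : 0 < y := Real.rpow_pos_of_pos (div_pos hC₁ hnpos) _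
  have hxadd : x ^ (1 + A₁) = x * x ^ A₁ := by
    rw [Real.rpow_add hx0, Real.rpow_one]
  have h1 : x ^ (1 + A₁) ≤ C₁ / n := by
    rw [le_div_iff₀ hnpos, hxadd]
    calc x * x ^ A₁ * n = F x * x ^ A₁ := by rw [hFx]; ring
      _ ≤ C₁ := hup'
  have hxy : x ≤ y := by
    have h2 : (x ^ (1 + A₁)) ^ (1/(1 + A₁)) ≤ y :=
      Real.rpow_le_rpow (by positivity) h1 (by positivity)
    rwa [← Real.rpow_mul hx0.le, mul_one_div, div_self h1A₁.ne', Real.rpow_one] at h2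
  -- n * x ≥ C₂ / x ^ A₂ ≥ C₂ / y ^ A₂
  have hxA₂pos : (0:ℝ) < x ^ A₂ := Real.rpow_pos_of_pos hx0 A₂
  have hstep : C₂ / x ^ A₂ ≤ n * x := by
    rw [div_le_iff₀ hxA₂pos]
    calc C₂ ≤ F x * x ^ A₂ := hlow'
      _ = n * x * x ^ A₂ := by rw [hFx]
  have hxyA₂ : x ^ A₂ ≤ y ^ A₂ := Real.rpow_le_rpow hx0.le hxy hA₂.le
  have hdiv : C₂ / y ^ A₂ ≤ C₂ / x ^ A₂ := by gcongr
  have hyA₂ : y ^ A₂ = C₁ ^ γ / n ^ γ := by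
    rw [hydef, ← Real.rpow_mul (div_pos hC₁ hnpos).le,
      show 1 / (1 + A₁) * A₂ = γ by rw [hγdef]; ring,
      Real.div_rpow hC₁.le hnpos.le]
  have hC1γpos : 0 < C₁ ^ γ := Real.rpow_pos_of_pos hC₁ γ
  have hnγpos : 0 < n ^ γ := Real.rpow_pos_of_pos hnpos γ
  have hfinal : C₂ * n ^ γ / C₁ ^ γ ≤ n * x := by
    calc C₂ * n ^ γ / C₁ ^ γ = C₂ / (C₁ ^ γ / n ^ γ) := by
          field_simp
      _ = C₂ / y ^ A₂ := by rw [hyA₂]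
      _ ≤ C₂ / x ^ A₂ := hdiv
      _ ≤ n * x := hstep
  refine le_trans ?_ hfinal
  -- n ^ α ≤ C₂ * n ^ γ / C₁ ^ γ
  have hnγ : n ^ γ = n ^ α * n ^ α := by
    rw [← Real.rpow_add hnpos]; congr 1; rw [hαdef]; ring
  have hKn : K ≤ n ^ α := by
    have h3 := Real.rpow_le_rpow (Real.rpow_nonneg hK0.le _) hn2 hα.le
    rwa [← Real.rpow_mul hK0.le, one_div, inv_mul_cancel₀ hα.ne', Real.rpow_one] at h3
  have hCK : C₁ ^ γ ≤ C₂ * n ^ α := by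
    have h4 : C₁ ^ γ / C₂ ≤ n ^ α := le_trans (le_max_right _ _) hKn
    rw [div_le_iff₀ hC₂] at h4
    linarith
  have hnαpos : 0 < n ^ α := Real.rpow_pos_of_pos hnpos α
  calc n ^ α = 1 * n ^ α := (one_mul _).symm
    _ ≤ (C₂ * n ^ α / C₁ ^ γ) * n ^ α := by
        apply mul_le_mul_of_nonneg_right _ hnαpos.le
        rw [le_div_iff₀ hC1γpos, one_mul]
        exact hCK
    _ = C₂ * n ^ γ / C₁ ^ γ := by rw [hnγ]; ring
end

section
/- Let F satisfy conditions (F1)–(F4) and let x₁(n) be the unique positive solution of F(x) = n·x. Then there exists ε > 0, depending only on A, A₁, A₂, such that for all sufficiently large n: (1+ε)·x₁(2n) < x₁(n) < (2−ε)·x₁(2n). One may take ε = (1/2)·min{1/(1+2A₁), A₂/(1+A₂)}. -/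
open Set Filter

set_option maxHeartbeats 1000000 in
theorem stmt_3 (A A₁ A₂ : ℝ) (hA : 0 < A) (hA₁ : 0 < A₁) (hA₂ : 0 < A₂)
    (F F' : ℝ → ℝ)
    (hFpos : ∀ x ∈ Set.Ioc 0 A, 0 < F x)
    (hanti : StrictAntiOn F (Set.Ioc 0 A))
    (htop : Filter.Tendsto F (nhdsWithin 0 (Set.Ioi 0)) Filter.atTop)
    (hderiv : ∀ x ∈ Set.Ioc 0 A, HasDerivAt F (F' x) x)
    (hlow : ∀ x ∈ Set.Ioc 0 A, A₂ * F x / x ≤ -F' x)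
    (hup : ∀ x ∈ Set.Ioc 0 A, -F' x ≤ A₁ * F x / x)
    (x₁ : ℝ → ℝ)
    (hx₁ : ∀ n : ℝ, F A / A ≤ n → x₁ n ∈ Set.Ioc 0 A ∧ F (x₁ n) = n * x₁ n) :
    ∃ ε > (0:ℝ),
      ε = (1/2) * min (1 / (1 + 2 * A₁)) (A₂ / (1 + A₂)) ∧
      ∃ N : ℝ, ∀ n : ℝ, N ≤ n →
        (1 + ε) * x₁ (2 * n) < x₁ n ∧ x₁ n < (2 - ε) * x₁ (2 * n) := by
  set ε : ℝ := (1/2) * min (1 / (1 + 2 * A₁)) (A₂ / (1 + A₂)) with hεdef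
  have hεpos : 0 < ε := by
    have h1 : (0:ℝ) < 1 / (1 + 2 * A₁) := by positivity
    have h2 : (0:ℝ) < A₂ / (1 + A₂) := by positivity
    have := lt_min h1 h2
    positivity
  have hεmul : ε * (2 * (1 + 2 * A₁)) ≤ 1 := by
    have hmin := min_le_left (1 / (1 + 2 * A₁)) (A₂ / (1 + A₂))
    have h1 : ε ≤ (1/2) * (1 / (1 + 2 * A₁)) := by rw [hεdef]; nlinarith
    have key : (1/2) * (1 / (1 + 2 * A₁)) * (2 * (1 + 2 * A₁)) = 1 := by
      field_simp
    have := mul_le_mul_of_nonneg_right h1 (show (0:ℝ) ≤ 2 * (1 + 2 * A₁) by positivity)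
    linarith
  have hε2 : ε ≤ (1/2) * (A₂ / (1 + A₂)) := by
    have := min_le_right (1 / (1 + 2 * A₁)) (A₂ / (1 + A₂))
    rw [hεdef]; nlinarith
  have hεhalf : ε < 1/2 := by
    have h2 : A₂ / (1 + A₂) < 1 := (div_lt_one (by linarith)).mpr (by linarith)
    linarith
  have hεA : ε ≤ A₂ / 2 := by
    have h2 : A₂ / (1 + A₂) ≤ A₂ := div_le_self hA₂.le (by linarith)
    linarith
  refine ⟨ε, hεpos, rfl, max 1 (F A / A), ?_⟩
  intro n hn
  have hn1 : (1:ℝ) ≤ n := le_trans (le_max_left _ _) hn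
  have hn0 : (0:ℝ) < n := by linarith
  have hnA : F A / A ≤ n := le_trans (le_max_right _ _) hn
  have hn2A : F A / A ≤ 2 * n := by linarith
  obtain ⟨hbmem, hFb⟩ := hx₁ n hnA
  obtain ⟨hamem, hFa⟩ := hx₁ (2 * n) hn2A
  set a := x₁ (2 * n) with hadef
  set b := x₁ n with hbdef
  have ha0 : 0 < a := hamem.1
  have hb0 : 0 < b := hbmem.1
  have hbA : b ≤ A := hbmem.2
  -- a < b
  have hab : a < b := by
    rcases lt_or_ge a b with h | h
    · exact h
    · exfalso
      have hFF : F a ≤ F b := by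
        rcases lt_or_eq_of_le h with h' | h'
        · exact (hanti hbmem hamem h').le
        · rw [h']
      rw [hFa, hFb] at hFF
      nlinarith [mul_pos hn0 ha0]
  have hIcc : Set.Icc a b ⊆ Set.Ioc 0 A := fun x hx => ⟨lt_of_lt_of_le ha0 hx.1, le_trans hx.2 hbA⟩
  -- derivative of log F + c log
  have derivG : ∀ (c : ℝ), ∀ x ∈ Set.Icc a b,
      HasDerivAt (fun y => Real.log (F y) + c * Real.log y) (F' x / F x + c * x⁻¹) x := by
    intro c x hx
    have hx' := hIcc hx
    have h1 : HasDerivAt (fun y => Real.log (F y)) (F' x / F x) x :=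
      (hderiv x hx').log (ne_of_gt (hFpos x hx'))
    have h2 : HasDerivAt (fun y => c * Real.log y) (c * x⁻¹) x :=
      (Real.hasDerivAt_log (ne_of_gt hx'.1)).const_mul c
    exact h1.add h2
  -- monotone with A₁
  have mono1 : MonotoneOn (fun y => Real.log (F y) + A₁ * Real.log y) (Set.Icc a b) := by
    apply monotoneOn_of_deriv_nonneg (convex_Icc a b)
    · intro x hx
      exact ((derivG A₁ x hx).continuousAt).continuousWithinAt
    · intro x hx
      exact ((derivG A₁ x (interior_subset hx)).differentiableAt).differentiableWithinAt
    · intro x hx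
      have hx' : x ∈ Set.Icc a b := interior_subset hx
      rw [(derivG A₁ x hx').deriv]
      have hxm := hIcc hx'
      have hFx := hFpos x hxm
      have hx0 := hxm.1
      have hu := hup x hxm
      have hmul : -F' x * x ≤ A₁ * F x := (le_div_iff₀ hx0).mp hu
      have heq : F' x / F x + A₁ * x⁻¹ = (F' x * x + A₁ * F x) / (F x * x) := by
        field_simp
      rw [heq]
      apply div_nonneg (by linarith) (by positivity)
  -- antitone with A₂
  have mono2 : AntitoneOn (fun y => Real.log (F y) + A₂ * Real.log y) (Set.Icc a b) := by
    apply antitoneOn_of_deriv_nonpos (convex_Icc a b)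
    · intro x hx
      exact ((derivG A₂ x hx).continuousAt).continuousWithinAt
    · intro x hx
      exact ((derivG A₂ x (interior_subset hx)).differentiableAt).differentiableWithinAt
    · intro x hx
      have hx' : x ∈ Set.Icc a b := interior_subset hx
      rw [(derivG A₂ x hx').deriv]
      have hxm := hIcc hx'
      have hFx := hFpos x hxm
      have hx0 := hxm.1
      have hl := hlow x hxm
      have hmul : A₂ * F x ≤ -F' x * x := (div_le_iff₀ hx0).mp hl
      have heq : F' x / F x + A₂ * x⁻¹ = (F' x * x + A₂ * F x) / (F x * x) := by
        field_simp
      rw [heq]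
      apply div_nonpos_of_nonpos_of_nonneg (by linarith) (by positivity)
  have hmema : a ∈ Set.Icc a b := Set.left_mem_Icc.mpr hab.le
  have hmemb : b ∈ Set.Icc a b := Set.right_mem_Icc.mpr hab.le
  have k1 := mono1 hmema hmemb hab.le
  have k2 := mono2 hmema hmemb hab.le
  simp only at k1 k2
  -- expand logs
  have lFa : Real.log (F a) = Real.log 2 + Real.log n + Real.log a := by
    rw [hFa, Real.log_mul (by positivity) ha0.ne',
      Real.log_mul (by norm_num) hn0.ne']
  have lFb : Real.log (F b) = Real.log n + Real.log b := by
    rw [hFb, Real.log_mul hn0.ne' hb0.ne']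
  rw [lFa, lFb] at k1 k2
  have K1 : Real.log 2 ≤ (1 + A₁) * (Real.log b - Real.log a) := by
    ring_nf; ring_nf at k1; linarith
  have K2 : (1 + A₂) * (Real.log b - Real.log a) ≤ Real.log 2 := by
    ring_nf; ring_nf at k2; linarith
  have hlog2 : (1/2 : ℝ) < Real.log 2 := by
    have := Real.log_two_gt_d9; linarith
  constructor
  · -- lower bound
    have hlog1 : Real.log (1 + ε) ≤ ε := by
      have := Real.log_le_sub_one_of_pos (show (0:ℝ) < 1 + ε by linarith)
      linarith
    have h2 : (1 + A₁) * ε ≤ 1/2 := by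
      have haux : 0 ≤ ε * A₁ := mul_nonneg hεpos.le hA₁.le
      nlinarith [hεmul, haux]
    have h12 : (1 + A₁) * Real.log (1 + ε) < (1 + A₁) * (Real.log b - Real.log a) := by
      have := mul_le_mul_of_nonneg_left hlog1 (show (0:ℝ) ≤ 1 + A₁ by linarith)
      linarith
    have hlt : Real.log (1 + ε) < Real.log b - Real.log a :=
      lt_of_mul_lt_mul_left h12 (by linarith)
    rw [← Real.log_div hb0.ne' ha0.ne'] at hlt
    have hfrac : 1 + ε < b / a := by
      have := Real.exp_lt_exp.mpr hlt
      rwa [Real.exp_log (by linarith), Real.exp_log (by positivity)] at this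
    exact (lt_div_iff₀ ha0).mp hfrac
  · -- upper bound
    have h2eps : (3:ℝ)/2 ≤ 2 - ε := by linarith
    have hlog32 : (1:ℝ)/3 < Real.log (3/2) := by
      have hexp : Real.exp ((1:ℝ)/3) < 3/2 := by
        have h : Real.exp ((1:ℝ)/3) ^ (3:ℕ) = Real.exp 1 := by
          rw [← Real.exp_nat_mul]; norm_num
        by_contra hc
        push_neg at hc
        have h2 : ((3:ℝ)/2) ^ (3:ℕ) ≤ Real.exp ((1:ℝ)/3) ^ (3:ℕ) :=
          pow_le_pow_left₀ (by norm_num) hc 3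
        rw [h] at h2
        have hone := Real.exp_one_lt_d9
        norm_num at h2
        exact absurd (h2.trans_lt hone) (by norm_num)
      exact (Real.lt_log_iff_exp_lt (by norm_num)).mpr hexp
    have p1 : Real.log (2 / (2 - ε)) ≤ 2 / (2 - ε) - 1 :=
      Real.log_le_sub_one_of_pos (by positivity)
    have p2 : Real.log (2 / (2 - ε)) = Real.log 2 - Real.log (2 - ε) :=
      Real.log_div (by norm_num) (by linarith)
    have p3 : 2 / (2 - ε) - 1 = ε / (2 - ε) := by
      field_simp
      ring
    have p4 : ε / (2 - ε) ≤ (2/3) * ε := by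
      rw [div_le_iff₀ (by linarith : (0:ℝ) < 2 - ε)]
      nlinarith [hεpos, hεhalf]
    have p5 : (2/3 : ℝ) * ε ≤ A₂ / 3 := by linarith
    have p6 : Real.log (3/2) ≤ Real.log (2 - ε) :=
      Real.log_le_log (by norm_num) h2eps
    have p7 : A₂ / 3 < A₂ * Real.log (2 - ε) := by nlinarith
    have h2' : Real.log 2 < (1 + A₂) * Real.log (2 - ε) := by nlinarith
    have hfin : (1 + A₂) * (Real.log b - Real.log a) < (1 + A₂) * Real.log (2 - ε) := by
      linarith
    have hlt : Real.log b - Real.log a < Real.log (2 - ε) :=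
      lt_of_mul_lt_mul_left hfin (by linarith)
    rw [← Real.log_div hb0.ne' ha0.ne'] at hlt
    have hfrac : b / a < 2 - ε := by
      have := Real.exp_lt_exp.mpr hlt
      rwa [Real.exp_log (by positivity), Real.exp_log (by linarith)] at this
    exact (div_lt_iff₀ ha0).mp hfrac
end

section
/- For each positive integer k, the sum of k!/(m₁!·m₂!·⋯·m_k!·(k − m₁ − ⋯ − m_k)!) over all tuples of nonnegative integers (m₁,…,m_k) with m₁ + 2m₂ + ⋯ + k·m_k = k equals (1/2)·C(2k, k), i.e. half the central binomial coefficient. -/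
open Finset PowerSeries


-- coefficient computation: coeff k of (∑ i ∈ range (k+1), X^i)^k over ℚ
lemma coeff_geom_pow (k : ℕ) (hk : 0 < k) :
    (coeff (R := ℚ) k) ((∑ i ∈ range (k + 1), (X : ℚ⟦X⟧) ^ i) ^ k)
      = Nat.choose (2 * k - 1) (k - 1) := by
  have hgeom : (∑ i ∈ range (k + 1), (X : ℚ⟦X⟧) ^ i) * (1 - X) = 1 - X ^ (k + 1) := by
    have := geom_sum_mul (X : ℚ⟦X⟧) (k + 1)
    linear_combination -this
  have hPk : (∑ i ∈ range (k + 1), (X : ℚ⟦X⟧) ^ i) ^ k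
      = (1 - X ^ (k + 1)) ^ k * (invOneSubPow ℚ k).val := by
    have h1 : ((1 : ℚ⟦X⟧) - X) ^ k * (invOneSubPow ℚ k).val = 1 := by
      have := (invOneSubPow ℚ k).inv_val
      rwa [invOneSubPow_inv_eq_one_sub_pow] at this
    calc (∑ i ∈ range (k + 1), (X : ℚ⟦X⟧) ^ i) ^ k
        = (∑ i ∈ range (k + 1), (X : ℚ⟦X⟧) ^ i) ^ k * (((1 : ℚ⟦X⟧) - X) ^ k * (invOneSubPow ℚ k).val) := by
          rw [h1, mul_one]
      _ = ((∑ i ∈ range (k + 1), (X : ℚ⟦X⟧) ^ i) * (1 - X)) ^ k * (invOneSubPow ℚ k).val := by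
          rw [mul_pow]; ring
      _ = (1 - X ^ (k + 1)) ^ k * (invOneSubPow ℚ k).val := by rw [hgeom]
  obtain ⟨c, hc⟩ : (X : ℚ⟦X⟧) ^ (k + 1) ∣ (1 - X ^ (k + 1)) ^ k - 1 := by
    have h := sub_dvd_pow_sub_pow ((1 : ℚ⟦X⟧) - X ^ (k + 1)) 1 k
    rw [one_pow] at h
    have : ((1 : ℚ⟦X⟧) - X ^ (k + 1)) - 1 = -(X ^ (k + 1)) := by ring
    rw [this] at h
    exact (neg_dvd.mp h)
  have hexp : (1 - X ^ (k + 1)) ^ k = 1 + X ^ (k + 1) * c := by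
    linear_combination hc
  rw [hPk, hexp, add_mul, one_mul, mul_assoc, map_add]
  rw [coeff_X_pow_mul' (c * (invOneSubPow ℚ k).val) (k + 1) k, if_neg (by omega)]
  rw [invOneSubPow_val_eq_mk_sub_one_add_choose_of_pos ℚ k hk, coeff_mk, add_zero]
  congr 2
  omega


lemma coeff_geom_pow' (k : ℕ) :
    (coeff (R := ℚ) k) ((∑ i ∈ range (k + 1), (X : ℚ⟦X⟧) ^ i) ^ k)
      = ∑ m ∈ (piAntidiag (range (k + 1)) k).filter
          (fun m => ∑ i ∈ range (k + 1), i * m i = k),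
        (Nat.multinomial (range (k + 1)) m : ℚ) := by
  rw [Finset.sum_pow_eq_sum_piAntidiag (range (k + 1)) (fun i => (X : ℚ⟦X⟧) ^ i) k]
  rw [map_sum, Finset.sum_filter]
  refine Finset.sum_congr rfl fun m hm => ?_
  have : ∏ i ∈ range (k + 1), ((X : ℚ⟦X⟧) ^ i) ^ m i
      = X ^ (∑ i ∈ range (k + 1), i * m i) := by
    rw [← Finset.prod_pow_eq_pow_sum]
    exact Finset.prod_congr rfl fun i _ => by rw [← pow_mul]
  rw [this, ← map_natCast (C (R := ℚ)), coeff_C_mul, coeff_X_pow]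
  by_cases h : ∑ i ∈ range (k + 1), i * m i = k
  · simp [h]
  · rw [if_neg h, if_neg (fun hh => h hh.symm), mul_zero]


lemma sum_dite_fin {M : Type*} [AddCommMonoid M] (k : ℕ) (g : Fin k → M) :
    ∑ j ∈ range k, (if h : j < k then g ⟨j, h⟩ else 0) = ∑ i : Fin k, g i := by
  rw [← Fin.sum_univ_eq_sum_range (fun j => if h : j < k then g ⟨j, h⟩ else 0) k]
  exact Finset.sum_congr rfl fun i _ => by simp

lemma prod_dite_fin {M : Type*} [CommMonoid M] (k : ℕ) (g : Fin k → M) :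
    ∏ j ∈ range k, (if h : j < k then g ⟨j, h⟩ else 1) = ∏ i : Fin k, g i := by
  rw [← Fin.prod_univ_eq_prod_range (fun j => if h : j < k then g ⟨j, h⟩ else 1) k]
  exact Finset.prod_congr rfl fun i _ => by simp

lemma bij_sum (k : ℕ) (hk : 0 < k) :
    ∑ m ∈ (Fintype.piFinset fun _ : Fin k => Finset.range (k + 1)).filter
        (fun m => ∑ i : Fin k, (i.val + 1) * m i = k),
      ((Nat.factorial k : ℚ) /
        ((∏ i : Fin k, (Nat.factorial (m i) : ℚ)) *
          (Nat.factorial (k - ∑ i : Fin k, m i) : ℚ)))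
    = ∑ m ∈ (piAntidiag (range (k + 1)) k).filter
          (fun m => ∑ i ∈ range (k + 1), i * m i = k),
        (Nat.multinomial (range (k + 1)) m : ℚ) := by
  have key : ∀ m' : Fin k → ℕ, ∑ i : Fin k, (i.val + 1) * m' i = k →
      ∑ i : Fin k, m' i ≤ k := by
    intro m' hsum
    calc ∑ i : Fin k, m' i ≤ ∑ i : Fin k, (i.val + 1) * m' i :=
      Finset.sum_le_sum fun i _ => Nat.le_mul_of_pos_left _ (Nat.succ_pos _)
    _ = k := hsum
  refine Finset.sum_nbij'
    (i := fun m' => fun j => if j = 0 then k - ∑ i : Fin k, m' i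
      else if h : j - 1 < k then m' ⟨j - 1, h⟩ else 0)
    (j := fun m => fun i : Fin k => m (i.val + 1)) ?_ ?_ ?_ ?_ ?_
  · -- hi : maps into target
    intro m' hm'
    simp only [mem_filter, Fintype.mem_piFinset, mem_range] at hm'
    obtain ⟨hbd, hsum⟩ := hm'
    have hle := key m' hsum
    have hsum0 : ∑ j ∈ range (k + 1), (if j = 0 then k - ∑ i : Fin k, m' i
        else if h : j - 1 < k then m' ⟨j - 1, h⟩ else 0) = k := by
      rw [Finset.sum_range_succ']
      simp only [Nat.succ_ne_zero, if_false, if_true, Nat.add_sub_cancel, ite_true,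
        Nat.add_eq, reduceIte]
      rw [sum_dite_fin k m']
      omega
    have hwt : ∑ j ∈ range (k + 1), j * (if j = 0 then k - ∑ i : Fin k, m' i
        else if h : j - 1 < k then m' ⟨j - 1, h⟩ else 0) = k := by
      rw [Finset.sum_range_succ']
      simp only [Nat.succ_ne_zero, if_false, zero_mul, add_zero, Nat.add_sub_cancel]
      have heq : (∑ x ∈ range k, (x + 1) * if h : x < k then m' ⟨x, h⟩ else 0)
          = ∑ i : Fin k, (i.val + 1) * m' i := by
        rw [← sum_dite_fin k (fun i => (i.val + 1) * m' i)]
        refine Finset.sum_congr rfl fun j hj => ?_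
        rw [dif_pos (mem_range.mp hj), dif_pos (mem_range.mp hj)]
      rw [heq, hsum]
    simp only [mem_filter, mem_piAntidiag]
    refine ⟨⟨hsum0, ?_⟩, hwt⟩
    · intro j hj
      rw [mem_range]
      by_contra hjk
      push_neg at hjk
      apply hj
      rw [if_neg (by omega), dif_neg (by omega)]
  · -- hj
    intro m hm
    simp only [mem_filter, mem_piAntidiag] at hm
    obtain ⟨⟨hsum, _⟩, hwt⟩ := hm
    simp only [mem_filter, Fintype.mem_piFinset, mem_range]
    constructor
    · intro i
      have h1 : m (i.val + 1) ≤ ∑ j ∈ range (k + 1), m j :=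
        Finset.single_le_sum (f := m) (fun _ _ => Nat.zero_le _)
          (mem_range.mpr (by omega))
      have h2 : ∑ j ∈ range (k + 1), m j = k := hsum
      omega
    · have h2 : ∑ i : Fin k, (i.val + 1) * m (i.val + 1)
          = ∑ j ∈ range k, (j + 1) * m (j + 1) :=
        Fin.sum_univ_eq_sum_range (fun j => (j + 1) * m (j + 1)) k
      rw [h2]
      rw [Finset.sum_range_succ'] at hwt
      omega
  · -- left inverse
    intro m' _
    funext i
    simp only [Nat.succ_ne_zero, if_false, Nat.add_sub_cancel, dif_pos i.isLt]
  · -- right inverse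
    intro m hm
    simp only [mem_filter, mem_piAntidiag] at hm
    obtain ⟨⟨hsum, hsupp⟩, hwt⟩ := hm
    funext j
    show (if j = 0 then k - ∑ i : Fin k, m (i.val + 1)
      else if h : j - 1 < k then m ((⟨j - 1, h⟩ : Fin k).val + 1) else 0) = m j
    rcases j with _ | j
    · simp only [if_true, reduceIte]
      rw [Finset.sum_range_succ'] at hsum
      have h3 : ∑ i : Fin k, m (i.val + 1) = ∑ j ∈ range k, m (j + 1) :=
        Fin.sum_univ_eq_sum_range (fun j => m (j + 1)) k
      omega
    · by_cases h : j < k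
      · simp only [Nat.succ_ne_zero, if_false, Nat.add_sub_cancel, dif_pos h]
      · rw [if_neg (Nat.succ_ne_zero j), dif_neg (by omega)]
        by_contra hne
        have := hsupp (j + 1) (Ne.symm hne)
        rw [mem_range] at this
        omega
  · -- terms equal
    intro m' hm'
    simp only [mem_filter, Fintype.mem_piFinset, mem_range] at hm'
    obtain ⟨hbd, hsum⟩ := hm'
    have hle := key m' hsum
    set F : ℕ → ℕ := fun j => if j = 0 then k - ∑ i : Fin k, m' i
      else if h : j - 1 < k then m' ⟨j - 1, h⟩ else 0 with hF
    have hsum0 : ∑ j ∈ range (k + 1), F j = k := by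
      rw [Finset.sum_range_succ']
      simp only [hF, Nat.succ_ne_zero, if_false, Nat.add_sub_cancel, reduceIte]
      rw [sum_dite_fin k m']
      omega
    have hspec := Nat.multinomial_spec (range (k + 1)) F
    rw [hsum0] at hspec
    have hprod : ∏ j ∈ range (k + 1), (F j).factorial
        = (k - ∑ i : Fin k, m' i).factorial * ∏ i : Fin k, (m' i).factorial := by
      rw [Finset.prod_range_succ']
      simp only [hF, Nat.succ_ne_zero, if_false, Nat.add_sub_cancel, reduceIte]
      rw [mul_comm]
      congr 1
      rw [← prod_dite_fin k (fun i => (m' i).factorial)]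
      refine Finset.prod_congr rfl fun j hj => ?_
      rw [dif_pos (mem_range.mp hj), dif_pos (mem_range.mp hj)]
    have hQ : ((∏ i : Fin k, (Nat.factorial (m' i) : ℚ)) *
          (Nat.factorial (k - ∑ i : Fin k, m' i) : ℚ)) *
        (Nat.multinomial (range (k + 1)) F : ℚ) = (Nat.factorial k : ℚ) := by
      rw [hprod] at hspec
      have hc := congrArg (Nat.cast (R := ℚ)) hspec
      push_cast at hc
      linear_combination hc
    have hne : ((∏ i : Fin k, (Nat.factorial (m' i) : ℚ)) *
          (Nat.factorial (k - ∑ i : Fin k, m' i) : ℚ)) ≠ 0 := by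
      apply mul_ne_zero
      · exact Finset.prod_ne_zero_iff.mpr fun i _ => Nat.cast_ne_zero.mpr (Nat.factorial_ne_zero _)
      · exact Nat.cast_ne_zero.mpr (Nat.factorial_ne_zero _)
    rw [eq_comm, eq_div_iff hne, mul_comm]
    exact hQ


theorem stmt_5 (k : ℕ) (hk : 0 < k) :
    ∑ m ∈ (Fintype.piFinset fun _ : Fin k => Finset.range (k + 1)).filter
        (fun m => ∑ i : Fin k, (i.val + 1) * m i = k),
      ((Nat.factorial k : ℚ) /
        ((∏ i : Fin k, (Nat.factorial (m i) : ℚ)) *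
          (Nat.factorial (k - ∑ i : Fin k, m i) : ℚ)))
      = (Nat.choose (2 * k) k : ℚ) / 2 := by
  rw [bij_sum k hk, ← coeff_geom_pow' k, coeff_geom_pow k hk]
  have h2 : (2 * k - 1).choose k = (2 * k - 1).choose (k - 1) := by
    rw [← Nat.choose_symm (by omega : k ≤ 2 * k - 1)]
    congr 1
    omega
  have h1 : (2 * k).choose k = 2 * (2 * k - 1).choose (k - 1) := by
    have e1 : 2 * k = 2 * k - 1 + 1 := by omega
    have e2 : k = k - 1 + 1 := by omega
    calc (2 * k).choose k = (2 * k - 1 + 1).choose (k - 1 + 1) := by rw [← e1, ← e2]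
    _ = (2 * k - 1).choose (k - 1) + (2 * k - 1).choose (k - 1 + 1) :=
        Nat.choose_succ_succ _ _
    _ = (2 * k - 1).choose (k - 1) + (2 * k - 1).choose k := by rw [← e2]
    _ = 2 * (2 * k - 1).choose (k - 1) := by rw [h2]; ring
  rw [h1]
  push_cast
  ring
end

section
/- Let F satisfy (F1)–(F4), let x₀(k) be the unique solution of F(x) = k and x₁(n) the unique solution of F(x) = n·x (for large arguments). Then for each constant C > e and every sufficiently large n, there exists a positive integer k ≥ n·x₁(n)/C² such that (C·k/(n·x₀(k)))^k ≤ exp(−n·x₁(n)/C² + 1). -/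
open Set Filter

set_option maxHeartbeats 800000

theorem stmt_9 (A A₁ A₂ : ℝ) (hA : 0 < A) (hA₁ : 0 < A₁) (hA₂ : 0 < A₂)
    (F F' : ℝ → ℝ)
    (hFpos : ∀ x ∈ Set.Ioc 0 A, 0 < F x)
    (hanti : StrictAntiOn F (Set.Ioc 0 A))
    (htop : Filter.Tendsto F (nhdsWithin 0 (Set.Ioi 0)) Filter.atTop)
    (hderiv : ∀ x ∈ Set.Ioc 0 A, HasDerivAt F (F' x) x)
    (hlow : ∀ x ∈ Set.Ioc 0 A, A₂ * F x / x ≤ -F' x)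
    (hup : ∀ x ∈ Set.Ioc 0 A, -F' x ≤ A₁ * F x / x)
    (x₀ x₁ : ℝ → ℝ)
    (hx₀ : ∀ t : ℝ, F A ≤ t → x₀ t ∈ Set.Ioc 0 A ∧ F (x₀ t) = t)
    (hx₁ : ∀ t : ℝ, F A / A ≤ t → x₁ t ∈ Set.Ioc 0 A ∧ F (x₁ t) = t * x₁ t) :
    ∀ C : ℝ, Real.exp 1 < C → ∃ N : ℕ, ∀ n : ℕ, N ≤ n →
      ∃ k : ℕ, (n : ℝ) * x₁ n / C ^ 2 ≤ k ∧
        (C * k / (n * x₀ k)) ^ k ≤ Real.exp (-(1 / C ^ 2) * n * x₁ n + 1) := by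
  intro C hC
  have hFA : 0 < F A := hFpos A ⟨hA, le_refl A⟩
  have he1 : (1:ℝ) < Real.exp 1 := by
    have := Real.exp_one_gt_d9; linarith
  have he0 : (0:ℝ) < Real.exp 1 := by linarith
  have hC1 : (1:ℝ) < C := lt_trans he1 hC
  have hC0 : (0:ℝ) < C := by linarith
  have hC2 : (0:ℝ) < C ^ 2 := by positivity
  have heC : Real.exp 1 < 2.8 := by
    have := Real.exp_one_lt_d9; linarith
  have he27 : (2.7:ℝ) < Real.exp 1 := by
    have := Real.exp_one_gt_d9; linarith
  -- T n := n * x₁ n tends to infinity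
  have hT : Tendsto (fun n : ℕ => (n:ℝ) * x₁ n) atTop atTop := by
    rw [tendsto_atTop]
    intro M
    have hev : {x : ℝ | M ≤ F x} ∈ nhdsWithin 0 (Set.Ioi 0) := htop.eventually_ge_atTop M
    obtain ⟨δ, hδ0, hδ⟩ := mem_nhdsGT_iff_exists_Ioo_subset.mp hev
    have hδpos : (0:ℝ) < δ := hδ0
    have h1 : ∀ᶠ n : ℕ in atTop, F A / A ≤ (n:ℝ) :=
      tendsto_natCast_atTop_atTop.eventually_ge_atTop (F A / A)
    have h2 : ∀ᶠ n : ℕ in atTop, M / δ ≤ (n:ℝ) :=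
      tendsto_natCast_atTop_atTop.eventually_ge_atTop (M / δ)
    filter_upwards [h1, h2] with n hn1 hn2
    obtain ⟨hx1mem, hx1eq⟩ := hx₁ n hn1
    by_cases hcase : x₁ n < δ
    · have : x₁ n ∈ Set.Ioo 0 δ := ⟨hx1mem.1, hcase⟩
      have hM := hδ this
      simp only [Set.mem_setOf_eq] at hM
      rw [hx1eq] at hM
      exact hM
    · push_neg at hcase
      have hn0 : (0:ℝ) ≤ (n:ℝ) := Nat.cast_nonneg n
      have : M ≤ (n:ℝ) * δ := by
        rw [div_le_iff₀ hδpos] at hn2; linarith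
      calc M ≤ (n:ℝ) * δ := this
        _ ≤ (n:ℝ) * x₁ n := by
            apply mul_le_mul_of_nonneg_left hcase hn0
  -- collect eventual conditions
  have h1 : ∀ᶠ n : ℕ in atTop, F A / A ≤ (n:ℝ) :=
    tendsto_natCast_atTop_atTop.eventually_ge_atTop (F A / A)
  have h2 : ∀ᶠ n : ℕ in atTop, C ^ 2 * F A ≤ (n:ℝ) * x₁ n :=
    hT.eventually_ge_atTop _
  have h3 : ∀ᶠ n : ℕ in atTop, C ^ 2 / (C ^ 2 - 1) ≤ (n:ℝ) * x₁ n :=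
    hT.eventually_ge_atTop _
  have h4 : ∀ᶠ n : ℕ in atTop,
      Real.exp 1 * C ^ 2 / (C - Real.exp 1) ≤ (n:ℝ) * x₁ n :=
    hT.eventually_ge_atTop _
  have : ∀ᶠ n : ℕ in atTop, ∃ k : ℕ, (n : ℝ) * x₁ n / C ^ 2 ≤ k ∧
      (C * k / (n * x₀ k)) ^ k ≤ Real.exp (-(1 / C ^ 2) * n * x₁ n + 1) := by
    filter_upwards [h1, h2, h3, h4] with n hn1 hn2 hn3 hn4
    set T := (n:ℝ) * x₁ n with hTdef
    have hFAA : 0 < F A / A := div_pos hFA hA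
    obtain ⟨hx1mem, hx1eq⟩ := hx₁ n hn1
    have hx1pos : 0 < x₁ n := hx1mem.1
    have hnpos : (0:ℝ) < (n:ℝ) := lt_of_lt_of_le hFAA hn1
    have hTpos : 0 < T := mul_pos hnpos hx1pos
    refine ⟨⌈T / C ^ 2⌉₊, Nat.le_ceil _, ?_⟩
    set k := ⌈T / C ^ 2⌉₊ with hkdef
    have hk_ge : T / C ^ 2 ≤ (k:ℝ) := Nat.le_ceil _
    have hk_lt : (k:ℝ) < T / C ^ 2 + 1 := by
      apply Nat.ceil_lt_add_one
      positivity
    -- k ≤ T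
    have hC2big : (7:ℝ) < C ^ 2 := by nlinarith [hC, he27]
    have hTC2 : T / C ^ 2 ≤ T * (1 / 7) := by
      rw [div_le_iff₀ hC2]
      nlinarith
    have hkT : (k:ℝ) ≤ T := by
      have : T / C ^ 2 + 1 ≤ T := by
        rw [div_le_iff₀ (by linarith : (0:ℝ) < C ^ 2 - 1)] at hn3
        rw [div_add' _ _ _ (ne_of_gt hC2), div_le_iff₀ hC2]
        nlinarith
      linarith
    -- F A ≤ k
    have hkFA : F A ≤ (k:ℝ) := by
      have : F A ≤ T / C ^ 2 := by
        rw [le_div_iff₀ hC2]; linarith [hn2]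
      linarith
    obtain ⟨hx0mem, hx0eq⟩ := hx₀ k hkFA
    have hx0pos : 0 < x₀ (k:ℝ) := hx0mem.1
    -- x₁ n ≤ x₀ k
    have hx10 : x₁ n ≤ x₀ (k:ℝ) := by
      by_contra hlt
      push_neg at hlt
      have h := hanti hx0mem hx1mem hlt
      rw [hx0eq, hx1eq, ← hTdef] at h
      linarith
    have hTle : T ≤ (n:ℝ) * x₀ (k:ℝ) := mul_le_mul_of_nonneg_left hx10 (le_of_lt hnpos)
    have hnx0pos : 0 < (n:ℝ) * x₀ (k:ℝ) := mul_pos hnpos hx0pos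
    -- C * k ≤ T * exp(-1)
    have hCk : C * (k:ℝ) ≤ T * Real.exp (-1) := by
      have hexp : Real.exp (-1) = 1 / Real.exp 1 := by
        rw [Real.exp_neg]; ring
      rw [hexp]
      rw [div_le_iff₀ (by linarith : (0:ℝ) < C - Real.exp 1)] at hn4
      have h5 : C * (k:ℝ) ≤ C * (T / C ^ 2 + 1) := by
        apply mul_le_mul_of_nonneg_left (le_of_lt hk_lt) (le_of_lt hC0)
      have h6 : C * (T / C ^ 2 + 1) = T / C + C := by
        field_simp
      rw [h6] at h5
      have h7 : (T / C + C) * Real.exp 1 ≤ T := by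
        rw [div_add' _ _ _ (ne_of_gt hC0), div_mul_eq_mul_div, div_le_iff₀ hC0]
        nlinarith
      rw [mul_one_div, le_div_iff₀ he0]
      calc C * (k:ℝ) * Real.exp 1 ≤ (T / C + C) * Real.exp 1 :=
            mul_le_mul_of_nonneg_right h5 (le_of_lt he0)
        _ ≤ T := h7
    -- ratio ≤ exp(-1)
    have hratio : C * (k:ℝ) / ((n:ℝ) * x₀ (k:ℝ)) ≤ Real.exp (-1) := by
      rw [div_le_iff₀ hnx0pos]
      calc C * (k:ℝ) ≤ T * Real.exp (-1) := hCk
        _ ≤ Real.exp (-1) * ((n:ℝ) * x₀ (k:ℝ)) := by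
            rw [mul_comm]
            exact mul_le_mul_of_nonneg_left hTle (le_of_lt (Real.exp_pos _))
    have hrat0 : 0 ≤ C * (k:ℝ) / ((n:ℝ) * x₀ (k:ℝ)) := by positivity
    calc (C * (k:ℝ) / ((n:ℝ) * x₀ (k:ℝ))) ^ k
        ≤ Real.exp (-1) ^ k := pow_le_pow_left₀ hrat0 hratio k
      _ = Real.exp (-(k:ℝ)) := by
          rw [← Real.exp_nat_mul]; ring_nf
      _ ≤ Real.exp (-(1 / C ^ 2) * (n:ℝ) * x₁ n + 1) := by
          apply Real.exp_le_exp.2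
          have : -(1 / C ^ 2) * (n:ℝ) * x₁ n = -(T / C ^ 2) := by
            rw [hTdef]; ring
          rw [this]
          linarith
  rw [Filter.eventually_atTop] at this
  exact this
end

section
/- Let g : 𝕋 → ℝ be of the form g(t) = (t−a₁)⋯(t−a_m)·h(t) locally, where a₁,…,a_m are the distinct zeros of g on the circle (each simple) and |h(t)| ≥ b > 0 everywhere. Then there is a constant C = C(g) such that for every ε > 0 the sublevel set B_ε = {t ∈ 𝕋 : |g(t)| < ε} has Lebesgue measure |B_ε| ≤ C·ε. One may take C = 2mS/b where S = (3/min_{i<j}|a_i−a_j|)^{m−1}. -/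
open Set MeasureTheory Real

theorem stmt_11 (m : ℕ) (hm : 1 ≤ m) (a : Fin m → ℝ) (g h : ℝ → ℝ) (b d : ℝ)
    (hb : 0 < b) (hd : 0 < d)
    (hsep : ∀ i j : Fin m, i ≠ j → d ≤ |a i - a j|)
    (hfac : ∀ t ∈ Set.Icc (-Real.pi) Real.pi, g t = (∏ i : Fin m, (t - a i)) * h t)
    (hh : ∀ t ∈ Set.Icc (-Real.pi) Real.pi, b ≤ |h t|) :
    ∀ ε : ℝ, 0 < ε →
      MeasureTheory.volume {t ∈ Set.Icc (-Real.pi) Real.pi | |g t| < ε} ≤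
        ENNReal.ofReal (2 * m * (3 / d) ^ (m - 1) / b * ε) := by
  intro ε hε
  have hmpos : 0 < m := hm
  set r : ℝ := ε / ((d/2)^(m-1) * b) with hr
  have hpow : 0 < (d/2)^(m-1) := pow_pos (by linarith) _
  have hrpos : 0 < r := div_pos hε (mul_pos hpow hb)
  have hsub : {t ∈ Set.Icc (-Real.pi) Real.pi | |g t| < ε} ⊆
      ⋃ i : Fin m, Metric.ball (a i) r := by
    rintro t ⟨ht, hg⟩
    haveI : Nonempty (Fin m) := Fin.pos_iff_nonempty.mp hmpos
    obtain ⟨i, -, hi⟩ := Finset.exists_min_image Finset.univ (fun j => |t - a j|)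
      ⟨Classical.arbitrary (Fin m), Finset.mem_univ _⟩
    have hi' : ∀ j, |t - a i| ≤ |t - a j| := fun j => hi j (Finset.mem_univ j)
    have hfar : ∀ j ∈ Finset.univ.erase i, d/2 ≤ |t - a j| := by
      intro j hj
      have hji : j ≠ i := Finset.ne_of_mem_erase hj
      have hs := hsep i j (Ne.symm hji)
      have h1 : |a i - a j| ≤ |t - a i| + |t - a j| := by
        calc |a i - a j| ≤ |a i - t| + |t - a j| := abs_sub_le _ _ _
        _ = |t - a i| + |t - a j| := by rw [abs_sub_comm]
      have h2 := hi' j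
      linarith
    have hprod : (d/2)^(m-1) * |t - a i| ≤ ∏ j : Fin m, |t - a j| := by
      rw [← Finset.prod_erase_mul Finset.univ _ (Finset.mem_univ i)]
      have hc : (Finset.univ.erase i).card = m - 1 := by
        rw [Finset.card_erase_of_mem (Finset.mem_univ i), Finset.card_univ, Fintype.card_fin]
      have hle : (d/2)^(m-1) ≤ ∏ j ∈ Finset.univ.erase i, |t - a j| := by
        rw [← hc]
        calc (d/2)^(Finset.univ.erase i).card
            = ∏ _j ∈ Finset.univ.erase i, (d/2) := by rw [Finset.prod_const]
        _ ≤ _ := Finset.prod_le_prod (fun j _ => by linarith) hfar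
      exact mul_le_mul_of_nonneg_right hle (abs_nonneg _)
    have hgt : (d/2)^(m-1) * |t - a i| * b ≤ |g t| := by
      rw [hfac t ht, abs_mul, Finset.abs_prod]
      exact mul_le_mul hprod (hh t ht) hb.le
        (Finset.prod_nonneg fun _ _ => abs_nonneg _)
    have hlt : |t - a i| < r := by
      rw [hr, lt_div_iff₀ (mul_pos hpow hb)]
      calc |t - a i| * ((d/2)^(m-1) * b) = (d/2)^(m-1) * |t - a i| * b := by ring
      _ ≤ |g t| := hgt
      _ < ε := hg
    exact Set.mem_iUnion.mpr ⟨i, by simpa [Metric.mem_ball, Real.dist_eq] using hlt⟩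
  have key : r ≤ (3/d)^(m-1) / b * ε := by
    have e : (3/d)^(m-1) * (d/2)^(m-1) = (3/2:ℝ)^(m-1) := by
      rw [← mul_pow]
      congr 1
      field_simp
    rw [hr, div_le_iff₀ (mul_pos hpow hb)]
    have h1 : (1:ℝ) ≤ (3/2:ℝ)^(m-1) := one_le_pow₀ (by norm_num)
    calc ε = ε * 1 := by ring
    _ ≤ ε * (3/2:ℝ)^(m-1) := by nlinarith
    _ = (3/d)^(m-1) / b * ε * ((d/2)^(m-1) * b) := by
        rw [← e]; field_simp
  calc volume {t ∈ Set.Icc (-Real.pi) Real.pi | |g t| < ε}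
      ≤ volume (⋃ i : Fin m, Metric.ball (a i) r) := measure_mono hsub
  _ ≤ ∑ i : Fin m, volume (Metric.ball (a i) r) := measure_iUnion_fintype_le _ _
  _ = ∑ _i : Fin m, ENNReal.ofReal (2*r) := by simp [Real.volume_ball, two_mul]
  _ = (m : ENNReal) * ENNReal.ofReal (2*r) := by
      simp [Finset.sum_const, nsmul_eq_mul]
  _ = ENNReal.ofReal ((m:ℝ) * (2*r)) := by
      rw [← ENNReal.ofReal_natCast m, ← ENNReal.ofReal_mul (Nat.cast_nonneg m)]
  _ ≤ _ := by
      apply ENNReal.ofReal_le_ofReal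
      have hm0 : (0:ℝ) ≤ (m:ℝ) := Nat.cast_nonneg _
      calc (m:ℝ) * (2*r) ≤ (m:ℝ) * (2 * ((3/d)^(m-1) / b * ε)) := by
            apply mul_le_mul_of_nonneg_left _ hm0
            linarith
      _ = 2 * m * (3/d)^(m-1) / b * ε := by ring
end

section
/- For every positive integer n and every real x > 1 + 1/n², the Chebyshev polynomial T_n satisfies the logarithmic-derivative lower bound T_n'(x)/T_n(x) ≥ (1/4)·n/√(x²−1). -/
open Polynomial

lemma T_real_cosh_aux (t : ℝ) (m : ℤ) :
    (Polynomial.Chebyshev.T ℝ m).eval (Real.cosh t) = Real.cosh (m * t) := by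
  have h := Polynomial.Chebyshev.T_complex_cos ((t : ℂ) * Complex.I) m
  rw [Complex.cos_mul_I] at h
  have h2 : ((m : ℂ)) * ((t : ℂ) * Complex.I) = ((m * t : ℝ) : ℂ) * Complex.I := by
    push_cast; ring
  rw [h2, Complex.cos_mul_I] at h
  have hT := Polynomial.Chebyshev.complex_ofReal_eval_T (Real.cosh t) m
  rw [Complex.ofReal_cosh] at hT
  rw [← hT, ← Complex.ofReal_cosh] at h
  exact_mod_cast h

lemma U_real_cosh_aux (t : ℝ) (m : ℤ) :
    (Polynomial.Chebyshev.U ℝ m).eval (Real.cosh t) * Real.sinh t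
      = Real.sinh ((m + 1) * t) := by
  have h := Polynomial.Chebyshev.U_complex_cos ((t : ℂ) * Complex.I) m
  have h2 : ((m : ℂ) + 1) * ((t : ℂ) * Complex.I) = (((m + 1 : ℤ) * t : ℝ) : ℂ) * Complex.I := by
    push_cast; ring
  rw [Complex.cos_mul_I, Complex.sin_mul_I, h2, Complex.sin_mul_I] at h
  rw [← mul_assoc] at h
  have h' := mul_right_cancel₀ Complex.I_ne_zero h
  have hU := Polynomial.Chebyshev.complex_ofReal_eval_U (Real.cosh t) m
  rw [Complex.ofReal_cosh] at hU
  rw [← hU, ← Complex.ofReal_sinh, ← Complex.ofReal_sinh] at h'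
  exact_mod_cast h'

set_option maxHeartbeats 1000000 in
theorem stmt_13 (n : ℕ) (hn : 0 < n) :
    ∀ x : ℝ, 1 + 1 / (n : ℝ) ^ 2 < x →
      (1 / 4) * n / Real.sqrt (x ^ 2 - 1) ≤
        (Polynomial.derivative (Polynomial.Chebyshev.T ℝ n)).eval x /
          (Polynomial.Chebyshev.T ℝ n).eval x := by
  intro x hx
  have hn' : (0 : ℝ) < n := by exact_mod_cast hn
  have hn2 : (0 : ℝ) < 1 / (n : ℝ) ^ 2 := by positivity
  have hx1 : (1 : ℝ) < x := by linarith
  set s := Real.sqrt (x ^ 2 - 1) with hs_def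
  have hx2 : 0 < x ^ 2 - 1 := by nlinarith
  have hs2 : s ^ 2 = x ^ 2 - 1 := Real.sq_sqrt hx2.le
  have hs0 : 0 < s := Real.sqrt_pos.mpr hx2
  set u := x + s with hu_def
  have hu1 : 1 < u := by nlinarith
  have hu0 : 0 < u := by linarith
  have huinv : u⁻¹ = x - s := by
    have hmul : u * (x - s) = 1 := by rw [hu_def]; nlinarith
    exact inv_eq_of_mul_eq_one_right hmul
  set t := Real.log u with ht_def
  have ht0 : 0 < t := Real.log_pos hu1
  have hexpt : Real.exp t = u := Real.exp_log hu0
  have hcosh : Real.cosh t = x := by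
    rw [Real.cosh_eq, hexpt, Real.exp_neg, hexpt, huinv]; ring
  have hsinh : Real.sinh t = s := by
    rw [Real.sinh_eq, hexpt, Real.exp_neg, hexpt, huinv]; ring
  have hT : (Polynomial.Chebyshev.T ℝ (n : ℤ)).eval x = Real.cosh (n * t) := by
    rw [← hcosh, T_real_cosh_aux]; norm_num
  have hU : (Polynomial.Chebyshev.U ℝ ((n : ℤ) - 1)).eval x * s = Real.sinh (n * t) := by
    have h := U_real_cosh_aux t ((n : ℤ) - 1)
    rw [hcosh, hsinh] at h
    rw [h]; norm_num
  have hderiv : (Polynomial.derivative (Polynomial.Chebyshev.T ℝ (n : ℤ))).eval x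
      = n * ((Polynomial.Chebyshev.U ℝ ((n : ℤ) - 1)).eval x) := by
    rw [Polynomial.Chebyshev.T_derivative_eq_U]
    simp
  have hexpnt : Real.exp (n * t) = u ^ n := by
    rw [Real.exp_nat_mul, hexpt]
  have hcosh_nt : Real.cosh (n * t) = (u ^ n + (u ^ n)⁻¹) / 2 := by
    rw [Real.cosh_eq, hexpnt, Real.exp_neg, hexpnt]
  have hsinh_nt : Real.sinh (n * t) = (u ^ n - (u ^ n)⁻¹) / 2 := by
    rw [Real.sinh_eq, hexpnt, Real.exp_neg, hexpnt]
  -- lower bound on u^n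
  have hsb : Real.sqrt 2 / n ≤ s := by
    have h1 : 1 / (n : ℝ) ^ 2 < x - 1 := by linarith
    have h3 : (2 : ℝ) < x + 1 := by linarith
    have h4 := mul_lt_mul'' h1 h3 (le_of_lt hn2) (by norm_num)
    have h2 : 2 / (n : ℝ) ^ 2 < x ^ 2 - 1 := by
      calc 2 / (n : ℝ) ^ 2 = 1 / (n : ℝ) ^ 2 * 2 := by ring
        _ < (x - 1) * (x + 1) := h4
        _ = x ^ 2 - 1 := by ring
    have hsq : Real.sqrt (2 / (n : ℝ) ^ 2) ≤ Real.sqrt (x ^ 2 - 1) :=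
      Real.sqrt_le_sqrt h2.le
    have heq : Real.sqrt (2 / (n : ℝ) ^ 2) = Real.sqrt 2 / n := by
      rw [show (2 / (n : ℝ) ^ 2) = (Real.sqrt 2 / n) ^ 2 by
        rw [div_pow, Real.sq_sqrt (by norm_num : (0:ℝ) ≤ 2)]]
      exact Real.sqrt_sq (by positivity)
    rw [heq] at hsq
    exact hsq
  have hun : (2 : ℝ) ≤ u ^ n := by
    have hs2le : (1 : ℝ) ≤ Real.sqrt 2 := by
      rw [show (1:ℝ) = Real.sqrt 1 by simp]
      exact Real.sqrt_le_sqrt (by norm_num)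
    have ha0 : (0 : ℝ) ≤ Real.sqrt 2 / n := by positivity
    have ha : (-2 : ℝ) ≤ Real.sqrt 2 / n := by linarith
    have hb := one_add_mul_le_pow ha n
    have hmul : (n : ℝ) * (Real.sqrt 2 / n) = Real.sqrt 2 := by
      field_simp
    rw [hmul] at hb
    have hle : (1 + Real.sqrt 2 / n) ^ n ≤ u ^ n := by
      apply pow_le_pow_left₀ (by positivity) (by linarith) n
    linarith
  have hUpos : (0 : ℝ) < u ^ n := by positivity
  have hUinv : u ^ n * (u ^ n)⁻¹ = 1 := mul_inv_cancel₀ (ne_of_gt hUpos)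
  have hinvle : (u ^ n)⁻¹ ≤ 1 / 2 := by
    rw [inv_eq_one_div, div_le_div_iff₀ hUpos (by norm_num)]
    linarith
  have hinvpos : (0 : ℝ) < (u ^ n)⁻¹ := inv_pos.mpr hUpos
  have hkey : Real.cosh (n * t) ≤ 4 * Real.sinh (n * t) := by
    rw [hcosh_nt, hsinh_nt]
    linarith
  have hcoshpos : 0 < Real.cosh (n * t) := Real.cosh_pos _
  have heval : (Polynomial.Chebyshev.U ℝ ((n : ℤ) - 1)).eval x
      = Real.sinh (n * t) / s := by
    rw [eq_div_iff (ne_of_gt hs0)]; exact hU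
  rw [hderiv, hT, heval]
  rw [div_le_div_iff₀ hs0 hcoshpos]
  have hgoal : (1 / 4) * (n : ℝ) * Real.cosh (n * t) ≤ (n : ℝ) * Real.sinh (n * t) := by
    nlinarith
  calc 1 / 4 * (n : ℝ) * Real.cosh (n * t) ≤ (n : ℝ) * Real.sinh (n * t) := hgoal
    _ = (n : ℝ) * (Real.sinh (n * t) / s) * s := by field_simp
end

section
/- Assume F satisfies (F1)–(F4), x₁ solves F(x₁(n)) = n·x₁(n), and suppose the 'stretching' property holds: for each L > 0 there is Q = Q(L) > 1 with F(x₁(n)/L) ≤ Q·n·x₁(n) for large n. Then for all x ∈ [x₁(n)/L, A], F(x) ≤ Q·L·n·x. Consequently, if |F'(g(t))·g'(t)| ≥ M·n with M > Q·L·A₁·‖g'‖_∞, then |g(t)| < x₁(n)/L. -/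
open Set

theorem stmt_18 (A A₁ A₂ D L Q M n : ℝ)
    (hA : 0 < A) (hA₁ : 0 < A₁) (hA₂ : 0 < A₂) (hD : 0 < D) (hL : 0 < L)
    (hQ : 1 < Q) (hn : 0 < n)
    (F F' : ℝ → ℝ)
    (hFpos : ∀ x ∈ Set.Ioc 0 A, 0 < F x)
    (hFeven : ∀ x, F (-x) = F x)
    (hF'even : ∀ x, |F' (-x)| = |F' x|)
    (hanti : AntitoneOn F (Set.Ioc 0 A))
    (hup : ∀ x ∈ Set.Ioc 0 A, |F' x| ≤ A₁ * F x / x)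
    (x₁ : ℝ) (hx₁mem : x₁ ∈ Set.Ioc 0 A) (hx₁ : F x₁ = n * x₁)
    (hLA : x₁ / L ≤ A)
    (hstretch : F (x₁ / L) ≤ Q * n * x₁)
    (g g' : ℝ → ℝ)
    (hM : Q * L * A₁ * D < M) :
    (∀ x : ℝ, x₁ / L ≤ x → x ≤ A → F x ≤ Q * L * n * x) ∧
    (∀ t : ℝ, g t ≠ 0 → |g t| ≤ A → |g' t| ≤ D →
      M * n ≤ |F' (g t) * g' t| → |g t| < x₁ / L) := by
  obtain ⟨hx₁pos, hx₁A⟩ := hx₁mem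
  have hxLpos : 0 < x₁ / L := div_pos hx₁pos hL
  have part1 : ∀ x : ℝ, x₁ / L ≤ x → x ≤ A → F x ≤ Q * L * n * x := by
    intro x hx1 hx2
    have hxmem : x ∈ Set.Ioc 0 A := ⟨lt_of_lt_of_le hxLpos hx1, hx2⟩
    have h1 : F x ≤ F (x₁ / L) := hanti ⟨hxLpos, hLA⟩ hxmem hx1
    have h2 : Q * n * x₁ = Q * L * n * (x₁ / L) := by
      field_simp
    calc F x ≤ Q * n * x₁ := h1.trans hstretch
      _ = Q * L * n * (x₁ / L) := h2
      _ ≤ Q * L * n * x := by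
          apply mul_le_mul_of_nonneg_left hx1
          positivity
  refine ⟨part1, fun t hg0 hgA hg'D hMn => ?_⟩
  by_contra hcon
  push_neg at hcon
  set y := |g t| with hy
  have hymem : y ∈ Set.Ioc 0 A := ⟨abs_pos.mpr hg0, hgA⟩
  have hFy : F y = F (g t) := by
    rcases abs_cases (g t) with ⟨h, _⟩ | ⟨h, _⟩
    · rw [hy, h]
    · rw [hy, h, hFeven]
  have hF'y : |F' (g t)| = |F' y| := by
    rcases abs_cases (g t) with ⟨h, _⟩ | ⟨h, _⟩
    · rw [hy, h]
    · rw [hy, h]; exact (hF'even (g t)).symm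
  have hbound : |F' y| ≤ A₁ * F y / y := hup y hymem
  have hFypos : 0 < F y := hFpos y hymem
  have hypos : 0 < y := hymem.1
  have hFyle : F y ≤ Q * L * n * y := part1 y hcon hgA
  have key : |F' (g t) * g' t| ≤ Q * L * A₁ * D * n := by
    rw [abs_mul, hF'y]
    calc |F' y| * |g' t| ≤ (A₁ * F y / y) * D := by
          apply mul_le_mul hbound hg'D (abs_nonneg _)
          positivity
      _ ≤ (A₁ * (Q * L * n * y) / y) * D := by
          gcongr
      _ = Q * L * A₁ * D * n := by
          field_simp [ne_of_gt hymem.1]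
  have : M * n ≤ Q * L * A₁ * D * n := hMn.trans key
  have : M ≤ Q * L * A₁ * D := le_of_mul_le_mul_right (by linarith) hn
  linarith
end

section
/- Let c_n > 0 decrease to 0 and define ξ = log ω for an increasing continuous weight ω on (0,ε) with ω(0+) = 0, satisfying ξ((1−1/n)c_n)/ξ(c_n) > n² for every n. Set λ_n = 1 − 1/n, a_n = c_n/λ_n, and K_n = 2·⌊−ξ(c_n)/(λ_n a_n √(1−λ_n²))⌋. Then K_n → ∞, K_n λ_n a_n √(1−λ_n²) + ξ(λ_n a_n) → ∞, and for each r ∈ (0,1), 2K_n a_n + ξ(r a_n) → −∞ as n → ∞. -/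
open Set Filter

set_option maxHeartbeats 2000000 in
theorem stmt_19 (ε : ℝ) (hε : 0 < ε) (ξ : ℝ → ℝ)
    (hneg : ∀ x ∈ Set.Ioo 0 ε, ξ x < 0)
    (hmono : StrictMonoOn ξ (Set.Ioo 0 ε))
    (hcont : ContinuousOn ξ (Set.Ioo 0 ε))
    (hbot : Filter.Tendsto ξ (nhdsWithin 0 (Set.Ioi 0)) Filter.atBot)
    (c : ℕ → ℝ)
    (hcpos : ∀ n, 0 < c n) (hclt : ∀ n, c n < ε)
    (hcanti : Antitone c)
    (hc0 : Filter.Tendsto c Filter.atTop (nhds 0))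
    (hratio : ∀ n : ℕ, 2 ≤ n → ((n : ℝ)) ^ 2 < ξ ((1 - 1 / n) * c n) / ξ (c n))
    (lam a : ℕ → ℝ) (K : ℕ → ℕ)
    (hlam : ∀ n : ℕ, lam n = 1 - 1 / n)
    (ha : ∀ n : ℕ, a n = c n / lam n)
    (hK : ∀ n : ℕ,
      K n = 2 * Nat.floor (-ξ (c n) / (lam n * a n * Real.sqrt (1 - lam n ^ 2)))) :
    Filter.Tendsto K Filter.atTop Filter.atTop ∧
    Filter.Tendsto
      (fun n => (K n : ℝ) * lam n * a n * Real.sqrt (1 - lam n ^ 2) + ξ (lam n * a n))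
      Filter.atTop Filter.atTop ∧
    ∀ r ∈ Set.Ioo (0:ℝ) 1,
      Filter.Tendsto (fun n => 2 * (K n : ℝ) * a n + ξ (r * a n))
        Filter.atTop Filter.atBot := by
  have hc0pos : 0 < c 0 := hcpos 0
  have hcle : ∀ n, c n ≤ c 0 := fun n => hcanti (Nat.zero_le n)
  have hξneg : ∀ n, ξ (c n) < 0 := fun n => hneg _ ⟨hcpos n, hclt n⟩
  have hξc : Tendsto (fun n => ξ (c n)) atTop atBot := by
    apply hbot.comp
    exact tendsto_nhdsWithin_of_tendsto_nhds_of_eventually_within _ hc0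
      (Eventually.of_forall fun n => hcpos n)
  have hlam_half : ∀ n : ℕ, 2 ≤ n → (1:ℝ)/2 ≤ lam n := by
    intro n hn
    rw [hlam]
    have h2 : (0:ℝ) < 2 := by norm_num
    have hn' : (2:ℝ) ≤ n := by exact_mod_cast hn
    have : (1:ℝ)/n ≤ 1/2 := one_div_le_one_div_of_le h2 hn'
    linarith
  have hlam_lt1 : ∀ n : ℕ, 1 ≤ n → lam n < 1 := by
    intro n hn
    rw [hlam]
    have hn' : (0:ℝ) < n := by exact_mod_cast hn
    have : (0:ℝ) < 1/n := by positivity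
    linarith
  have hla : ∀ n : ℕ, 2 ≤ n → lam n * a n = c n := by
    intro n hn
    have hlne : lam n ≠ 0 := by have := hlam_half n hn; linarith
    rw [ha]
    field_simp
  have hsq_pos : ∀ n : ℕ, 2 ≤ n → 0 < 1 - lam n ^ 2 := by
    intro n hn
    have h1 := hlam_half n hn
    have h2 := hlam_lt1 n (by omega)
    nlinarith
  have hsq_le1 : ∀ n : ℕ, 2 ≤ n → 1 - lam n ^ 2 ≤ 1 := by
    intro n hn
    have h1 := hlam_half n hn
    nlinarith
  -- lower bound on K
  have hKe : ∀ n : ℕ, 2 ≤ n →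
      (K n : ℝ) = 2 * (Nat.floor (-ξ (c n) / (c n * Real.sqrt (1 - lam n ^ 2))) : ℝ) := by
    intro n hn
    rw [hK n, hla n hn]
    push_cast
    ring
  have hKlb : ∀ n : ℕ, 2 ≤ n → 2 * (-ξ (c n) / c 0 - 1) ≤ (K n : ℝ) := by
    intro n hn
    have hs_pos : 0 < Real.sqrt (1 - lam n ^ 2) := Real.sqrt_pos.mpr (hsq_pos n hn)
    have hs_le1 : Real.sqrt (1 - lam n ^ 2) ≤ 1 := Real.sqrt_le_one.mpr (hsq_le1 n hn)
    have hD_pos : 0 < c n * Real.sqrt (1 - lam n ^ 2) := mul_pos (hcpos n) hs_pos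
    have hD_le : c n * Real.sqrt (1 - lam n ^ 2) ≤ c 0 := by nlinarith [hcle n, hcpos n]
    have ht_ge : -ξ (c n) / c 0 ≤ -ξ (c n) / (c n * Real.sqrt (1 - lam n ^ 2)) := by
      apply div_le_div_of_nonneg_left (by linarith [hξneg n]) hD_pos hD_le
    have hfl := Nat.sub_one_lt_floor (-ξ (c n) / (c n * Real.sqrt (1 - lam n ^ 2)))
    rw [hKe n hn]
    linarith
  have hKDlb : ∀ n : ℕ, 2 ≤ n →
      -2 * ξ (c n) - 2 * c 0 ≤ (K n : ℝ) * (c n * Real.sqrt (1 - lam n ^ 2)) := by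
    intro n hn
    have hs_pos : 0 < Real.sqrt (1 - lam n ^ 2) := Real.sqrt_pos.mpr (hsq_pos n hn)
    have hs_le1 : Real.sqrt (1 - lam n ^ 2) ≤ 1 := Real.sqrt_le_one.mpr (hsq_le1 n hn)
    have hD_pos : 0 < c n * Real.sqrt (1 - lam n ^ 2) := mul_pos (hcpos n) hs_pos
    have hD_le : c n * Real.sqrt (1 - lam n ^ 2) ≤ c 0 := by nlinarith [hcle n, hcpos n]
    set D := c n * Real.sqrt (1 - lam n ^ 2) with hD
    set t := -ξ (c n) / D with htdef
    have hfl : t - 1 < (Nat.floor t : ℝ) := Nat.sub_one_lt_floor t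
    have h1 : 2 * (t - 1) ≤ (K n : ℝ) := by rw [hKe n hn]; linarith
    have h2 : 2 * (t - 1) * D ≤ (K n : ℝ) * D := mul_le_mul_of_nonneg_right h1 hD_pos.le
    have h3 : t * D = -ξ (c n) := div_mul_cancel₀ _ hD_pos.ne'
    nlinarith
  -- upper bound on 2 K a
  have hKub : ∀ n : ℕ, 2 ≤ n → 2 * (K n : ℝ) * a n ≤ -8 * n * ξ (c n) := by
    intro n hn
    have hnR : (2:ℝ) ≤ n := by exact_mod_cast hn
    have hl2 := hlam_half n hn
    have hlpos : (0:ℝ) < lam n := by linarith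
    have hs_pos : 0 < Real.sqrt (1 - lam n ^ 2) := Real.sqrt_pos.mpr (hsq_pos n hn)
    have hD_pos : 0 < c n * Real.sqrt (1 - lam n ^ 2) := mul_pos (hcpos n) hs_pos
    set s := Real.sqrt (1 - lam n ^ 2) with hs
    set t := -ξ (c n) / (c n * s) with htdef
    have ht0 : 0 ≤ t := div_nonneg (by linarith [hξneg n]) hD_pos.le
    have hKle : (K n : ℝ) ≤ 2 * t := by
      rw [hKe n hn]
      have := Nat.floor_le ht0
      linarith
    have hapos : 0 < a n := by rw [ha]; exact div_pos (hcpos n) hlpos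
    have h1 : 2 * (K n : ℝ) * a n ≤ 4 * (t * a n) := by nlinarith
    have h2 : t * a n = -ξ (c n) / (lam n * s) := by
      rw [htdef, ha]
      have hc' : c n ≠ 0 := (hcpos n).ne'
      have hs' : s ≠ 0 := hs_pos.ne'
      have hlne2 : lam n ≠ 0 := hlpos.ne'
      field_simp
    -- sqrt facts
    set u := Real.sqrt (n : ℝ) with hu
    have hu0 : 0 < u := Real.sqrt_pos.mpr (by linarith)
    have huu : u * u = (n : ℝ) := Real.mul_self_sqrt (by linarith)
    have hu1 : (1:ℝ) ≤ u := by nlinarith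
    have hq : ((n:ℝ))⁻¹ ≤ 1 - lam n ^ 2 := by
      rw [hlam]
      have h0 : (0:ℝ) < n := by linarith
      have key : 1 - (1 - 1/(n:ℝ))^2 - ((n:ℝ))⁻¹ = ((n:ℝ) - 1)/(n:ℝ)^2 := by
        field_simp
        ring
      have h2' : 0 ≤ ((n:ℝ) - 1)/(n:ℝ)^2 := div_nonneg (by linarith) (by positivity)
      linarith
    have hs_ge : u⁻¹ ≤ s := by
      rw [hu, ← Real.sqrt_inv]
      exact Real.sqrt_le_sqrt hq
    have hls : (0:ℝ) < lam n * s := mul_pos hlpos hs_pos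
    have hv : (1/2) * u⁻¹ ≤ lam n * s :=
      mul_le_mul hl2 hs_ge (inv_nonneg.mpr hu0.le) (by linarith)
    have hinv : u * u⁻¹ = 1 := mul_inv_cancel₀ hu0.ne'
    have huv : 1/2 ≤ u * (lam n * s) := by nlinarith
    have h3 : 4 * (-ξ (c n) / (lam n * s)) ≤ -8 * n * ξ (c n) := by
      rw [← mul_div_assoc, div_le_iff₀ hls, ← huu]
      have hP : 0 < -ξ (c n) := by linarith [hξneg n]
      have e1 : 4 * -ξ (c n) ≤ 4 * -ξ (c n) * u := by nlinarith
      have e2 : 4 * -ξ (c n) * u ≤ 8 * -ξ (c n) * u * (u * (lam n * s)) := by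
        nlinarith [mul_nonneg (mul_nonneg hP.le hu0.le)
          (by linarith : (0:ℝ) ≤ u * (lam n * s) - 1/2)]
      nlinarith [e1, e2]
    calc 2 * (K n : ℝ) * a n ≤ 4 * (t * a n) := h1
      _ = 4 * (-ξ (c n) / (lam n * s)) := by rw [h2]
      _ ≤ -8 * n * ξ (c n) := h3
  -- Part 1
  have hnegξ : Tendsto (fun n => -ξ (c n)) atTop atTop := tendsto_neg_atTop_iff.mpr hξc
  have part1 : Tendsto K atTop atTop := by
    rw [← tendsto_natCast_atTop_iff (R := ℝ)]
    apply tendsto_atTop_mono' atTop ?_ ?_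
    · exact fun n => 2 * (-ξ (c n) / c 0 - 1)
    · filter_upwards [eventually_ge_atTop 2] with n hn
      exact hKlb n hn
    · have h1 := hnegξ.atTop_div_const hc0pos
      have h2 := tendsto_atTop_add_const_right atTop (-1 : ℝ) h1
      have h3 := h2.const_mul_atTop (by norm_num : (0:ℝ) < 2)
      simpa [sub_eq_add_neg] using h3
  refine ⟨part1, ?_, ?_⟩
  -- Part 2
  · apply tendsto_atTop_mono' atTop ?_
      (tendsto_atTop_add_const_right atTop (-2 * c 0) hnegξ)
    filter_upwards [eventually_ge_atTop 2] with n hn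
    have hca := hla n hn
    have hKD := hKDlb n hn
    have he : (K n : ℝ) * lam n * a n * Real.sqrt (1 - lam n ^ 2) + ξ (lam n * a n)
        = (K n : ℝ) * (c n * Real.sqrt (1 - lam n ^ 2)) + ξ (c n) := by
      rw [mul_assoc ((K n : ℝ)) (lam n) (a n), hca]
      ring
    rw [he]
    linarith [hξneg n]
  -- Part 3
  · intro r hr
    obtain ⟨hr0, hr1⟩ := hr
    have hlamT : Tendsto (fun n : ℕ => lam n ^ 2) atTop (nhds 1) := by
      have h : Tendsto (fun n : ℕ => 1 - 1/(n:ℝ)) atTop (nhds 1) := by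
        have h0 : Tendsto (fun n : ℕ => 1 / (n:ℝ)) atTop (nhds 0) := tendsto_one_div_atTop_nhds_zero_nat
        have h2 := (tendsto_const_nhds (x := (1:ℝ)) (f := atTop)).sub h0
        simpa using h2
      have h' : Tendsto lam atTop (nhds 1) := by
        have : lam = fun n : ℕ => 1 - 1/(n:ℝ) := funext hlam
        rw [this]; exact h
      simpa using h'.pow 2
    have hev : ∀ᶠ n in atTop, r < lam n ^ 2 := hlamT.eventually (eventually_gt_nhds hr1)
    apply tendsto_atBot_mono' atTop ?_ hξc
    filter_upwards [hev, eventually_ge_atTop 9] with n hrn hn9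
    have hn2 : 2 ≤ n := by omega
    have hnR : (9:ℝ) ≤ n := by exact_mod_cast hn9
    have hl2 := hlam_half n hn2
    have hl1 : lam n < 1 := hlam_lt1 n (by omega)
    have hcp := hcpos n
    have hlpos : (0:ℝ) < lam n := by linarith
    have hapos : 0 < a n := by rw [ha]; exact div_pos hcp hlpos
    have hlt : r * a n < lam n * c n := by
      have h1 : r * a n < lam n ^ 2 * a n := mul_lt_mul_of_pos_right hrn hapos
      have h2 : lam n ^ 2 * a n = lam n * c n := by
        rw [ha]
        field_simp
      linarith
    have hmem1 : r * a n ∈ Set.Ioo (0:ℝ) ε := by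
      refine ⟨mul_pos hr0 hapos, ?_⟩
      have h1 : lam n * c n < c n := by nlinarith
      have h2 := hclt n
      linarith
    have hmem2 : lam n * c n ∈ Set.Ioo (0:ℝ) ε := by
      refine ⟨mul_pos hlpos hcp, ?_⟩
      nlinarith [hclt n]
    have hξ1 : ξ (r * a n) < ξ (lam n * c n) := hmono hmem1 hmem2 hlt
    have hξ2 : ξ (lam n * c n) < (n:ℝ)^2 * ξ (c n) := by
      have h := hratio n hn2
      rw [← hlam n] at h
      exact (lt_div_iff_of_neg (hξneg n)).mp h
    have h3 := hKub n hn2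
    have hfac : ((n:ℝ)^2 - 8*n - 1) * ξ (c n) ≤ 0 :=
      mul_nonpos_of_nonneg_of_nonpos (by nlinarith) (hξneg n).le
    nlinarith
end
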